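/- Let p_0, …, p_n (n ≥ 1) be the vertices of a left-turning polygonal arc in ℝ² with turning angles θ_1, …, θ_{n−1} ∈ (0, π) whose total curvature θ_1 + ⋯ + θ_{n−1} is strictly less than π. Let R_0 = { p_0 − t·(p_1 − p_0) : t ≥ 0 } be the backward extension ray of the first edge and R_1 = { p_n + s·(p_n − p_{n−1}) : s ≥ 0 } be the forward extension ray of the last edge. Then R_0 and R_1 are disjoint. -/

import Mathlib

open Real Finset

/-- The planar cross product (2×2 determinant) of two vectors in `ℝ²`. -/
def detv (u v : EuclideanSpace ℝ (Fin 2)) : ℝ := u 0 * v 1 - u 1 * v 0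

/-- `p 0, …, p n` is a polygonal arc (consecutive vertices distinct) which is left-turning with
turning angles `θ 1, …, θ (n-1) ∈ (0, π)`: at each interior vertex the oriented angle from the
incoming edge direction to the outgoing edge direction equals `θ j`; for `θ j ∈ (0, π)` this is
equivalent to the cross product of the two edge directions being positive together with the
unoriented angle between them being `θ j`. -/
def IsLeftTurningArc (p : ℕ → EuclideanSpace ℝ (Fin 2)) (θ : ℕ → ℝ) (n : ℕ) : Prop :=
  (∀ j, j < n → p (j + 1) ≠ p j) ∧
  ∀ j, 1 ≤ j → j ≤ n - 1 →
    0 < θ j ∧ θ j < Real.pi ∧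
    0 < detv (p j - p (j - 1)) (p (j + 1) - p j) ∧
    InnerProductGeometry.angle (p j - p (j - 1)) (p (j + 1) - p j) = θ j

noncomputable def toC (v : EuclideanSpace ℝ (Fin 2)) : ℂ := ⟨v 0, v 1⟩

lemma toC_sub (u v : EuclideanSpace ℝ (Fin 2)) : toC (u - v) = toC u - toC v := by
  simp [toC, Complex.ext_iff]

lemma toC_add (u v : EuclideanSpace ℝ (Fin 2)) : toC (u + v) = toC u + toC v := by
  simp [toC, Complex.ext_iff]

lemma toC_smul (r : ℝ) (v : EuclideanSpace ℝ (Fin 2)) : toC (r • v) = (r : ℂ) * toC v := by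
  simp [toC, Complex.ext_iff]

lemma toC_ne_zero {v : EuclideanSpace ℝ (Fin 2)} (h : v ≠ 0) : toC v ≠ 0 := by
  intro hc
  apply h
  rw [Complex.ext_iff] at hc
  ext i
  fin_cases i <;> simp_all [toC]

lemma abs_toC (v : EuclideanSpace ℝ (Fin 2)) : ‖toC v‖ = ‖v‖ := by
  rw [EuclideanSpace.norm_eq, Complex.norm_def, Complex.normSq_apply]
  simp [toC, Fin.sum_univ_two, sq]

lemma re_conj_mul (u v : EuclideanSpace ℝ (Fin 2)) :
    ((starRingEnd ℂ) (toC u) * toC v).re = inner ℝ u v := by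
  simp [toC, PiLp.inner_apply, Fin.sum_univ_two, RCLike.inner_apply, mul_comm]

lemma im_conj_mul (u v : EuclideanSpace ℝ (Fin 2)) :
    ((starRingEnd ℂ) (toC u) * toC v).im = detv u v := by
  simp [toC, detv]; ring

/-- If the cross product is positive, the oriented angle is the unoriented angle. -/
lemma arg_conj_mul_eq_angle {u v : EuclideanSpace ℝ (Fin 2)} (_hu : u ≠ 0) (_hv : v ≠ 0)
    (hdet : 0 < detv u v) :
    Complex.arg ((starRingEnd ℂ) (toC u) * toC v) = InnerProductGeometry.angle u v := by
  have him : 0 < ((starRingEnd ℂ) (toC u) * toC v).im := by rwa [im_conj_mul]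
  rw [Complex.arg_of_im_pos him, InnerProductGeometry.angle]
  congr 1
  rw [re_conj_mul, norm_mul, Complex.norm_conj, abs_toC, abs_toC]

/-- For a left-turning polygonal arc of total curvature strictly less than `π`, the backward
extension ray of the first edge and the forward extension ray of the last edge are disjoint. -/
theorem extension_rays_disjoint
    (n : ℕ) (hn : 1 ≤ n) (p : ℕ → EuclideanSpace ℝ (Fin 2)) (θ : ℕ → ℝ)
    (harc : IsLeftTurningArc p θ n)
    (hcurv : (∑ j ∈ Finset.Icc 1 (n - 1), θ j) < Real.pi) :
    Disjoint
      {x : EuclideanSpace ℝ (Fin 2) | ∃ t : ℝ, 0 ≤ t ∧ x = p 0 - t • (p 1 - p 0)}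
      {x : EuclideanSpace ℝ (Fin 2) | ∃ s : ℝ, 0 ≤ s ∧ x = p n + s • (p n - p (n - 1))} := by
  obtain ⟨hne, hturn⟩ := harc
  set z : ℕ → ℂ := fun j => toC (p (j + 1) - p j) with hzdef
  have hz0 : ∀ j, j < n → z j ≠ 0 := fun j hj =>
    toC_ne_zero (sub_ne_zero.2 (hne j hj))
  set φ : ℕ → ℝ := fun j => ∑ i ∈ Finset.Icc 1 j, θ i with hφdef
  have hθpos : ∀ i, 1 ≤ i → i ≤ n - 1 → 0 < θ i := fun i h1 h2 => (hturn i h1 h2).1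
  have hφmono : ∀ j, j ≤ n - 1 → φ j ≤ φ (n - 1) := by
    intro j hj
    apply Finset.sum_le_sum_of_subset_of_nonneg
    · exact Finset.Icc_subset_Icc_right hj
    · intro i hi _
      exact (hθpos i (Finset.mem_Icc.1 hi).1 (Finset.mem_Icc.1 hi).2).le
  have hφnonneg : ∀ j, j ≤ n - 1 → 0 ≤ φ j := by
    intro j hj
    apply Finset.sum_nonneg
    intro i hi
    exact (hθpos i (Finset.mem_Icc.1 hi).1 (le_trans (Finset.mem_Icc.1 hi).2 hj)).le
  have hΘ0 : 0 ≤ φ (n - 1) := hφnonneg _ le_rfl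
  have hΘπ : φ (n - 1) < Real.pi := hcurv
  -- key: arg of (conj z0 * z j) equals φ j
  have key : ∀ j, j ≤ n - 1 → Complex.arg ((starRingEnd ℂ) (z 0) * z j) = φ j := by
    intro j
    induction j with
    | zero =>
      intro _
      have : (starRingEnd ℂ) (z 0) * z 0 = (Complex.normSq (z 0) : ℂ) := by
        rw [mul_comm, Complex.mul_conj]
      rw [this, Complex.arg_ofReal_of_nonneg (Complex.normSq_nonneg _)]
      simp [hφdef]
    | succ j ih =>
      intro hj1
      have hj : j ≤ n - 1 := by omega
      have hjn : j < n := by omega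
      have hj1n : j + 1 < n := by omega
      obtain ⟨hθp, hθπ, hdet, hang⟩ := hturn (j + 1) (by omega) hj1
      have hsimp : j + 1 - 1 = j := by omega
      rw [hsimp] at hdet hang
      have harg : Complex.arg ((starRingEnd ℂ) (z j) * z (j + 1)) = θ (j + 1) := by
        rw [hzdef]
        rw [arg_conj_mul_eq_angle (sub_ne_zero.2 (hne j hjn))
          (sub_ne_zero.2 (hne (j + 1) hj1n)) hdet, hang]
      have hφsucc : φ (j + 1) = φ j + θ (j + 1) := by
        rw [hφdef]
        exact Finset.sum_Icc_succ_top (by omega) θ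
      have hprod : (starRingEnd ℂ) (z 0) * z (j + 1) * (Complex.normSq (z j) : ℂ) =
          ((starRingEnd ℂ) (z 0) * z j) * ((starRingEnd ℂ) (z j) * z (j + 1)) := by
        rw [← Complex.mul_conj (z j)]
        ring
      have hnsq : (0 : ℝ) < Complex.normSq (z j) := by
        rw [Complex.normSq_pos]; exact hz0 j hjn
      have h1 : Complex.arg ((starRingEnd ℂ) (z 0) * z (j + 1)) =
          Complex.arg (((starRingEnd ℂ) (z 0) * z j) * ((starRingEnd ℂ) (z j) * z (j + 1))) := by
        rw [← hprod, mul_comm _ ((Complex.normSq (z j) : ℂ)), Complex.arg_real_mul _ hnsq]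
      rw [h1]
      have ha : (starRingEnd ℂ) (z 0) * z j ≠ 0 :=
        mul_ne_zero (by simpa using hz0 0 (by omega)) (hz0 j hjn)
      have hb : (starRingEnd ℂ) (z j) * z (j + 1) ≠ 0 :=
        mul_ne_zero (by simpa using hz0 j hjn) (hz0 (j + 1) hj1n)
      have hmem : Complex.arg ((starRingEnd ℂ) (z 0) * z j) +
          Complex.arg ((starRingEnd ℂ) (z j) * z (j + 1)) ∈ Set.Ioc (-Real.pi) Real.pi := by
        rw [ih hj, harg]
        have hρ := Real.pi_pos
        have hφn := hφnonneg j hj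
        have hle : φ (j + 1) ≤ φ (n - 1) := hφmono _ hj1
        rw [hφsucc] at hle
        exact ⟨by linarith, by linarith⟩
      rw [Complex.arg_mul ha hb hmem, ih hj, harg, hφsucc]
  -- positivity of rotated real parts
  set w : ℂ := Complex.exp ((-(φ (n - 1) / 2) : ℝ) * Complex.I) with hwdef
  have hre : ∀ j, j < n → 0 < ((starRingEnd ℂ) (z 0) * z j * w).re := by
    intro j hj
    have hj' : j ≤ n - 1 := by omega
    set c := (starRingEnd ℂ) (z 0) * z j with hcdef
    have hc : c ≠ 0 := mul_ne_zero (by simpa using hz0 0 (by omega)) (hz0 j hj)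
    have habs : 0 < ‖c‖ := norm_pos_iff.mpr hc
    have hdecomp : c * w = (‖c‖ : ℂ) *
        Complex.exp ((Complex.arg c + -(φ (n - 1) / 2) : ℝ) * Complex.I) := by
      conv_lhs => rw [← Complex.norm_mul_exp_arg_mul_I c]
      rw [hwdef, mul_assoc, ← Complex.exp_add]
      push_cast
      ring_nf
    rw [hdecomp]
    rw [Complex.re_ofReal_mul, Complex.exp_ofReal_mul_I_re]
    apply mul_pos habs
    apply Real.cos_pos_of_mem_Ioo
    rw [key j hj']
    have h1 := hφnonneg j hj'
    have h2 := hφmono j hj'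
    have := Real.pi_pos
    exact ⟨by linarith, by linarith⟩
  -- the main argument
  rw [Set.disjoint_left]
  rintro x ⟨t, ht, rfl⟩ ⟨s, hs, hx⟩
  have hx' : toC (p 0) - (t : ℂ) * z 0 = toC (p n) + (s : ℂ) * z (n - 1) := by
    have h := congrArg toC hx
    simp only [toC_sub, toC_add, toC_smul] at h
    have e0 : z 0 = toC (p 1) - toC (p 0) := by
      show toC (p (0 + 1) - p 0) = _
      rw [toC_sub]
    have e1 : z (n - 1) = toC (p n) - toC (p (n - 1)) := by
      show toC (p (n - 1 + 1) - p (n - 1)) = _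
      rw [Nat.sub_add_cancel hn, toC_sub]
    rw [e0, e1]
    exact h
  have tele : (∑ j ∈ Finset.range n, z j) = toC (p n) - toC (p 0) := by
    have h := Finset.sum_range_sub (fun j => toC (p j)) n
    rw [← h]
    apply Finset.sum_congr rfl
    intro j _
    show toC (p (j + 1) - p j) = _
    rw [toC_sub]
  have hE : (∑ j ∈ Finset.range n, z j) + (s : ℂ) * z (n - 1) + (t : ℂ) * z 0 = 0 := by
    rw [tele]
    have : toC (p n) = toC (p 0) - (t : ℂ) * z 0 - (s : ℂ) * z (n - 1) := by
      rw [hx']; ring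
    rw [this]; ring
  have h0 : ((starRingEnd ℂ) (z 0) * ((∑ j ∈ Finset.range n, z j) + (s : ℂ) * z (n - 1)
      + (t : ℂ) * z 0) * w).re = 0 := by
    rw [hE]; simp
  have hpos : 0 < ((starRingEnd ℂ) (z 0) * ((∑ j ∈ Finset.range n, z j) + (s : ℂ) * z (n - 1)
      + (t : ℂ) * z 0) * w).re := by
    have hexpand : (starRingEnd ℂ) (z 0) * ((∑ j ∈ Finset.range n, z j) + (s : ℂ) * z (n - 1)
        + (t : ℂ) * z 0) * w =
        (∑ j ∈ Finset.range n, (starRingEnd ℂ) (z 0) * z j * w) +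
        (s : ℂ) * ((starRingEnd ℂ) (z 0) * z (n - 1) * w) +
        (t : ℂ) * ((starRingEnd ℂ) (z 0) * z 0 * w) := by
      have hS : (starRingEnd ℂ) (z 0) * (∑ j ∈ Finset.range n, z j) * w =
          ∑ j ∈ Finset.range n, (starRingEnd ℂ) (z 0) * z j * w := by
        rw [Finset.mul_sum, Finset.sum_mul]
      rw [mul_add, mul_add, add_mul, add_mul, hS]
      ring
    rw [hexpand, Complex.add_re, Complex.add_re, Complex.re_sum,
      Complex.re_ofReal_mul, Complex.re_ofReal_mul]
    have hsum : 0 < ∑ j ∈ Finset.range n, ((starRingEnd ℂ) (z 0) * z j * w).re := by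
      apply Finset.sum_pos
      · intro j hj
        exact hre j (Finset.mem_range.1 hj)
      · exact Finset.nonempty_range_iff.2 (by omega)
    have h1 : 0 ≤ s * ((starRingEnd ℂ) (z 0) * z (n - 1) * w).re :=
      mul_nonneg hs (hre (n - 1) (by omega)).le
    have h2 : 0 ≤ t * ((starRingEnd ℂ) (z 0) * z 0 * w).re :=
      mul_nonneg ht (hre 0 (by omega)).le
    linarith
  linarith [h0, hpos]
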